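/- For p ≥ 0 and |x| < 1, ∑_{n=0}^∞ (n+r)_{p,λ} ( 1/(1-x) - ∑_{l=0}^n x^l ) = (x/(1-x)^2) F_{p,λ}( x/(1-x) | r ). -/

import Mathlib

/-- Generalized falling factorial `(y)_{m,λ} = y(y-λ)⋯(y-(m-1)λ)`. -/
noncomputable def degFallFact (y l : ℝ) (m : ℕ) : ℝ :=
  ∏ i ∈ Finset.range m, (y - i * l)

lemma aux_hasSum (k : ℕ) (x : ℝ) (hx : |x| < 1) :
    HasSum (fun n : ℕ => (∏ i ∈ Finset.range k, ((n : ℝ) - i)) * x ^ n)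
      ((k.factorial : ℝ) * x ^ k / (1 - x) ^ (k + 1)) := by
  have hx' : ‖x‖ < 1 := by simpa [Real.norm_eq_abs] using hx
  have h := (hasSum_choose_mul_geometric_of_norm_lt_one k hx').mul_left
      ((k.factorial : ℝ) * x ^ k)
  have key : HasSum (fun n : ℕ =>
      (∏ i ∈ Finset.range k, (((n + k : ℕ) : ℝ) - i)) * x ^ (n + k))
      ((k.factorial : ℝ) * x ^ k * (1 / (1 - x) ^ (k + 1))) := by
    convert h using 2 with n
    · rfl
    have hprod : (∏ i ∈ Finset.range k, (((n + k : ℕ) : ℝ) - i))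
        = (((n + k).descFactorial k : ℕ) : ℝ) := by
      rw [Nat.descFactorial_eq_prod_range, Nat.cast_prod]
      apply Finset.prod_congr rfl
      intro i hi
      rw [Nat.cast_sub (by simp at hi; omega)]
    rw [hprod, Nat.descFactorial_eq_factorial_mul_choose, Nat.cast_mul, pow_add]
    ring
  have := (hasSum_nat_add_iff
      (f := fun n : ℕ => (∏ i ∈ Finset.range k, ((n : ℝ) - i)) * x ^ n) k).mp key
  have hzero : ∑ i ∈ Finset.range k,
      (∏ j ∈ Finset.range k, ((i : ℝ) - j)) * x ^ i = 0 := by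
    apply Finset.sum_eq_zero
    intro i hi
    have : (∏ j ∈ Finset.range k, ((i : ℝ) - j)) = 0 :=
      Finset.prod_eq_zero hi (by simp)
    simp [this]
  rw [hzero, add_zero] at this
  convert this using 1
  · rfl
  ring

/-- for `|x| < 1`,
`∑_{n≥0} (n+r)_{p,λ} (1/(1-x) - ∑_{l=0}^n x^l) = (x/(1-x)^2) F_{p,λ}(x/(1-x) | r)`. -/
theorem tsum_tails_eq_fubini (l : ℝ) (p r : ℕ) (S : ℕ → ℕ → ℝ)
    (hS : ∀ (m : ℕ) (x : ℝ), degFallFact (x + r) l m =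
      ∑ k ∈ Finset.range (m + 1), S m k * ∏ i ∈ Finset.range k, (x - i))
    (x : ℝ) (hx : |x| < 1) :
    HasSum (fun n : ℕ =>
        degFallFact (n + r) l p * (1 / (1 - x) - ∑ i ∈ Finset.range (n + 1), x ^ i))
      ((x / (1 - x) ^ 2) * ∑ k ∈ Finset.range (p + 1),
        (k.factorial : ℝ) * S p k * (x / (1 - x)) ^ k) := by
  have hx1 : (1 : ℝ) - x ≠ 0 := by
    have h := abs_lt.mp hx
    intro h0; linarith
  have hfun : (fun n : ℕ => degFallFact (n + r) l p *
        (1 / (1 - x) - ∑ i ∈ Finset.range (n + 1), x ^ i))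
      = fun n : ℕ => ∑ k ∈ Finset.range (p + 1),
          S p k * ((∏ i ∈ Finset.range k, ((n : ℝ) - i)) * x ^ n) * (x / (1 - x)) := by
    funext n
    have hgeo : (1 : ℝ) / (1 - x) - ∑ i ∈ Finset.range (n + 1), x ^ i
        = x ^ (n + 1) / (1 - x) := by
      have hx2 : x - 1 ≠ 0 := fun h => hx1 (by have := sub_eq_zero.mp h; linarith)
      rw [geom_sum_eq (fun h => hx1 (by rw [h]; ring))]
      field_simp
      ring
    rw [hS p n, hgeo, Finset.sum_mul]
    apply Finset.sum_congr rfl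
    intro k _
    field_simp
    ring
  rw [hfun]
  have htgt : (x / (1 - x) ^ 2) * ∑ k ∈ Finset.range (p + 1),
        (k.factorial : ℝ) * S p k * (x / (1 - x)) ^ k
      = ∑ k ∈ Finset.range (p + 1),
          S p k * ((k.factorial : ℝ) * x ^ k / (1 - x) ^ (k + 1)) * (x / (1 - x)) := by
    rw [Finset.mul_sum]
    apply Finset.sum_congr rfl
    intro k _
    rw [div_pow]
    field_simp
    ring
  rw [htgt]
  exact hasSum_sum fun k _ => ((aux_hasSum k x hx).mul_left (S p k)).mul_right _
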